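/- Let M = M_0 ⊕ M_1 with M_0 = span{a} one-dimensional and M_1 = span{v_1,...,v_n,y_1,...,y_n}, with multiplication a·v_i = y_i = -v_i·a, M·y_i = 0, v_i·v_j = δ_{ij}a, and bilinear form B(a,a)=1, B(M_1,a)=0, B(y_i,y_j)=B(v_i,v_j)=0, B(y_i,v_j)=δ_{ij}=-B(v_j,y_i). Then M is a Malcev superalgebra and B is an invariant scalar product on M (i.e., (M,B) is a quadratic Malcev superalgebra). -/

import Mathlib

open scoped BigOperators

/-- The sign `(-1)^(x·y)` for degrees `x, y ∈ ℤ/2`. -/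
def sgn (K : Type) [Field K] (x y : ZMod 2) : K := (-1 : K) ^ (x.val * y.val)

section Defs

variable (K : Type) [Field K] (V : Type) [AddCommGroup V] [Module K V]

/-- `(g, mul)` is a Malcev superalgebra structure on `V`:  a `ℤ/2`-grading by submodules
which is a direct sum decomposition, such that the (bilinear) multiplication respects the
grading, is graded skew-symmetric (`XY = -(-1)^{xy} YX`) and satisfies the graded Malcev
identity. -/
def IsMalcevSuper (g : ZMod 2 → Submodule K V) (mul : V →ₗ[K] V →ₗ[K] V) : Prop :=
  DirectSum.IsInternal g ∧
    (∀ x y X Y, X ∈ g x → Y ∈ g y → mul X Y ∈ g (x + y)) ∧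
    (∀ x y X Y, X ∈ g x → Y ∈ g y → mul X Y = -(sgn K x y) • mul Y X) ∧
    (∀ x y z t X Y Z T, X ∈ g x → Y ∈ g y → Z ∈ g z → T ∈ g t →
      sgn K y z • mul (mul X Z) (mul Y T) =
        mul (mul (mul X Y) Z) T + sgn K x (y + z + t) • mul (mul (mul Y Z) T) X +
          sgn K (x + y) (z + t) • mul (mul (mul Z T) X) Y +
          sgn K t (x + y + z) • mul (mul (mul T X) Y) Z)

/-- `B` is an invariant scalar product: even, supersymmetric, non-degenerate, invariant. -/
def IsQuadratic (g : ZMod 2 → Submodule K V) (mul : V →ₗ[K] V →ₗ[K] V)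
    (B : V →ₗ[K] V →ₗ[K] K) : Prop :=
  (∀ x y X Y, X ∈ g x → Y ∈ g y → x ≠ y → B X Y = 0) ∧
    (∀ x y X Y, X ∈ g x → Y ∈ g y → B X Y = sgn K x y * B Y X) ∧
    (∀ X, (∀ Y, B X Y = 0) → X = 0) ∧
    (∀ X Y Z, B (mul X Y) Z = B X (mul Y Z))

/-- A linear endomorphism is homogeneous of degree `α`. -/
def IsHomogMap (g : ZMod 2 → Submodule K V) (α : ZMod 2) (φ : V →ₗ[K] V) : Prop :=
  ∀ x X, X ∈ g x → φ X ∈ g (x + α)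

/-- Malcev operator identity for a homogeneous endomorphism `φ`. -/
def IsMalcevOp (g : ZMod 2 → Submodule K V) (mul : V →ₗ[K] V →ₗ[K] V)
    (φ : V →ₗ[K] V) : Prop :=
  ∀ x y z X Y Z, X ∈ g x → Y ∈ g y → Z ∈ g z →
    φ (mul (mul X Y) Z) =
      mul (mul (φ X) Y) Z - sgn K x y • mul (φ Y) (mul X Z) -
        sgn K z (x + y) • mul (mul (φ Z) X) Y - sgn K x (y + z) • mul (φ (mul Y Z)) X

/-- `φ` (homogeneous of degree `α`) is skew-supersymmetric with respect to `B`. -/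
def IsSkewSuper (g : ZMod 2 → Submodule K V) (B : V →ₗ[K] V →ₗ[K] K) (α : ZMod 2)
    (φ : V →ₗ[K] V) : Prop :=
  ∀ x X Y, X ∈ g x → B (φ X) Y = -(sgn K α x) * B X (φ Y)

/-- Scalar-valued Malcev 2-cocycle. -/
def IsCocycle (g : ZMod 2 → Submodule K V) (mul : V →ₗ[K] V →ₗ[K] V)
    (ω : V →ₗ[K] V →ₗ[K] K) : Prop :=
  (∀ x y X Y, X ∈ g x → Y ∈ g y → ω X Y = -(sgn K x y) * ω Y X) ∧
    (∀ x y z t X Y Z T, X ∈ g x → Y ∈ g y → Z ∈ g z → T ∈ g t →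
      sgn K y z * ω (mul X Z) (mul Y T) =
        ω (mul (mul X Y) Z) T + sgn K x (y + z + t) * ω (mul (mul Y Z) T) X +
          sgn K (x + y) (z + t) * ω (mul (mul Z T) X) Y +
          sgn K t (x + y + z) * ω (mul (mul T X) Y) Z)

/-- The four compatibility conditions on an odd operator `D` and `A₀ ∈ M₀` entering the
generalized double extension. -/
def GDEConds (g : ZMod 2 → Submodule K V) (mul : V →ₗ[K] V →ₗ[K] V)
    (D : V →ₗ[K] V) (A0 : V) : Prop :=
  D (D A0) = (1 / 2 : K) • mul A0 A0 ∧
    (∀ X, D (mul A0 X) = mul A0 (D X) - mul (D A0) X) ∧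
    (∀ x y X Y, X ∈ g x → Y ∈ g y →
      mul (mul A0 X) Y =
        D (mul (D X) Y) + D (D (mul X Y)) + ((-1 : K) ^ x.val) • mul (D X) (D Y) +
          sgn K x y • mul (D (D Y)) X) ∧
    (∀ x y X Y, X ∈ g x → Y ∈ g y →
      mul A0 (mul X Y) =
        D (mul (D X) Y) + mul (D (D X)) Y -
          sgn K x y • (mul (D (D Y)) X + D (mul (D Y) X)))

/-- The grading of the generalized double extension `Ke ⊕ M ⊕ Ke*` (with `e`, `e*` odd),
realized on the carrier `K × V × K`. -/
def gdeGrading (g : ZMod 2 → Submodule K V) : ZMod 2 → Submodule K (K × V × K) := fun x =>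
  if x = 0 then (⊥ : Submodule K K).prod ((g 0).prod (⊥ : Submodule K K))
  else (⊤ : Submodule K K).prod ((g 1).prod (⊤ : Submodule K K))

/-- The multiplication of the generalized double extension `k = Ke ⊕ M ⊕ Ke*`:
`ee = A₀`, `eX = D(X) - (-1)^x B(X,A₀)e*`, `XY = (XY)_M - B(D(X),Y)e*`, `e* k = 0`
(and `Xe = -(-1)^x eX` by graded skew-symmetry), written out bilinearly on the
carrier `K × V × K` (coordinates: coefficient of `e`, element of `M`, coefficient of `e*`). -/
def GDEMulFormula (g : ZMod 2 → Submodule K V) (mul : V →ₗ[K] V →ₗ[K] V)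
    (B : V →ₗ[K] V →ₗ[K] K) (D : V →ₗ[K] V) (A0 : V)
    (mulE : (K × V × K) →ₗ[K] (K × V × K) →ₗ[K] (K × V × K)) : Prop :=
  ∀ (p q : ZMod 2) (a c b d : K) (X Y : V), X ∈ g p → Y ∈ g q →
    mulE (a, X, c) (b, Y, d) =
      (0, (a * b) • A0 + mul X Y + a • D Y - ((-1 : K) ^ p.val * b) • D X,
        -(a * (-1 : K) ^ q.val * B Y A0) + b * B X A0 - B (D X) Y)

/-- `B`-irreducibility: every graded ideal on which `B` is non-degenerate is trivial. -/
def BIrreducible (g : ZMod 2 → Submodule K V) (mul : V →ₗ[K] V →ₗ[K] V)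
    (B : V →ₗ[K] V →ₗ[K] K) : Prop :=
  ∀ I : Submodule K V, (∀ X ∈ I, ∀ Y, mul X Y ∈ I) →
    I = (I ⊓ g 0) ⊔ (I ⊓ g 1) →
    (∀ X ∈ I, (∀ Y ∈ I, B X Y = 0) → X = 0) → I = ⊥ ∨ I = ⊤

end Defs

/-- the example: `M₀ = span{a}`, `M₁ = span{v₁,…,vₙ,y₁,…,yₙ}` with
`a·vᵢ = yᵢ = -vᵢ·a`, `M·yᵢ = 0`, `vᵢ·vⱼ = δᵢⱼ a`, and
`B(a,a) = 1`, `B(yᵢ,vⱼ) = δᵢⱼ = -B(vⱼ,yᵢ)`, all other pairings zero,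
is a quadratic Malcev superalgebra.  The carrier is `K × (Fin n → K) × (Fin n → K)`
with coordinates (coefficient of `a`, coefficients of the `vᵢ`, coefficients of the `yᵢ`). -/
theorem stmt9 (K : Type) [Field K] [CharZero K] [IsAlgClosed K] (n : ℕ)
    (mul : (K × (Fin n → K) × (Fin n → K)) →ₗ[K] (K × (Fin n → K) × (Fin n → K)) →ₗ[K]
      (K × (Fin n → K) × (Fin n → K)))
    (hmul : ∀ (α β : K) (v y w z : Fin n → K),
      mul (α, v, y) (β, w, z) = (∑ i, v i * w i, (0 : Fin n → K), α • w - β • v))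
    (B : (K × (Fin n → K) × (Fin n → K)) →ₗ[K] (K × (Fin n → K) × (Fin n → K)) →ₗ[K] K)
    (hB : ∀ (α β : K) (v y w z : Fin n → K),
      B (α, v, y) (β, w, z) = α * β + (∑ i, y i * w i) - ∑ i, v i * z i) :
    IsMalcevSuper K (K × (Fin n → K) × (Fin n → K))
      (fun x => if x = 0 then (⊤ : Submodule K K).prod (⊥ : Submodule K ((Fin n → K) × (Fin n → K)))
        else (⊥ : Submodule K K).prod (⊤ : Submodule K ((Fin n → K) × (Fin n → K)))) mul ∧
    IsQuadratic K (K × (Fin n → K) × (Fin n → K))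
      (fun x => if x = 0 then (⊤ : Submodule K K).prod (⊥ : Submodule K ((Fin n → K) × (Fin n → K)))
        else (⊥ : Submodule K K).prod (⊤ : Submodule K ((Fin n → K) × (Fin n → K)))) mul B := by
  classical
  set g : ZMod 2 → Submodule K (K × (Fin n → K) × (Fin n → K)) := fun x =>
    if x = 0 then (⊤ : Submodule K K).prod (⊥ : Submodule K ((Fin n → K) × (Fin n → K)))
      else (⊥ : Submodule K K).prod (⊤ : Submodule K ((Fin n → K) × (Fin n → K))) with hgdef
  have two : ∀ x : ZMod 2, x = 0 ∨ x = 1 := by decide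
  have mem0 : ∀ (α : K) (v y : Fin n → K), ((α, v, y) : K × (Fin n → K) × (Fin n → K)) ∈ g 0 ↔ v = 0 ∧ y = 0 := by
    intro α v y
    simp only [hgdef, if_pos rfl, Submodule.mem_prod, Submodule.mem_top, true_and, Submodule.mem_bot, Prod.mk_eq_zero]
  have mem1 : ∀ (α : K) (v y : Fin n → K), ((α, v, y) : K × (Fin n → K) × (Fin n → K)) ∈ g 1 ↔ α = 0 := by
    intro α v y
    simp only [hgdef, one_ne_zero, if_false, Submodule.mem_prod, Submodule.mem_top, and_true, Submodule.mem_bot]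
  have s00 : sgn K 0 0 = 1 := by norm_num [sgn]
  have s01 : sgn K 0 1 = 1 := by norm_num [sgn]
  have s10 : sgn K 1 0 = 1 := by norm_num [sgn]
  have s11 : sgn K 1 1 = -1 := by
    have h1 : (1 : ZMod 2).val = 1 := rfl
    show (-1 : K) ^ ((1 : ZMod 2).val * (1 : ZMod 2).val) = -1
    rw [h1]; norm_num
  -- all triple products vanish
  have htrip : ∀ X Y Z T : K × (Fin n → K) × (Fin n → K), mul (mul (mul X Y) Z) T = 0 := by
    intro ⟨α, v, y⟩ ⟨β, w, z⟩ ⟨γ, u, t⟩ ⟨δ, p, q⟩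
    rw [hmul, hmul, hmul]
    simp
  have hdbl : ∀ X Y Z T : K × (Fin n → K) × (Fin n → K), mul (mul X Y) (mul Z T) = 0 := by
    intro ⟨α, v, y⟩ ⟨β, w, z⟩ ⟨γ, u, t⟩ ⟨δ, p, q⟩
    rw [hmul, hmul, hmul]
    simp
  refine ⟨⟨?_, ?_, ?_, ?_⟩, ?_, ?_, ?_, ?_⟩
  · -- IsInternal
    apply DirectSum.isInternal_submodule_of_iSupIndep_of_iSup_eq_top
    · rw [iSupIndep_pair (ι := ZMod 2) (i := 0) (j := 1) (by decide) (by decide)]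
      rw [Submodule.disjoint_def]
      rintro ⟨α, v, y⟩ h0 h1
      rw [mem0] at h0
      rw [mem1] at h1
      simp [h0.1, h0.2, h1, Prod.ext_iff]
    · rw [eq_top_iff]
      rintro ⟨α, v, y⟩ -
      have h0 : ((α, 0, 0) : K × (Fin n → K) × (Fin n → K)) ∈ g 0 := by rw [mem0]; exact ⟨rfl, rfl⟩
      have h1 : ((0, v, y) : K × (Fin n → K) × (Fin n → K)) ∈ g 1 := by rw [mem1]
      have : ((α, v, y) : K × (Fin n → K) × (Fin n → K)) = (α, 0, 0) + (0, v, y) := by simp [Prod.ext_iff]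
      rw [this]
      exact add_mem (Submodule.mem_iSup_of_mem 0 h0) (Submodule.mem_iSup_of_mem 1 h1)
  · -- grading
    rintro x y ⟨α, v, yy⟩ ⟨β, w, z⟩ hX hY
    rcases two x with rfl | rfl <;> rcases two y with rfl | rfl
    · rw [mem0] at hX hY
      obtain ⟨rfl, rfl⟩ := hX; obtain ⟨rfl, rfl⟩ := hY
      rw [hmul]; norm_num; exact (mem0 0 0 0).2 ⟨rfl, rfl⟩
    · rw [mem0] at hX; rw [mem1] at hY
      obtain ⟨rfl, rfl⟩ := hX; subst hY
      rw [hmul]; norm_num; rw [mem1]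
    · rw [mem1] at hX; rw [mem0] at hY
      subst hX; obtain ⟨rfl, rfl⟩ := hY
      rw [hmul]; norm_num; rw [mem1]
    · rw [mem1] at hX hY
      subst hX; subst hY
      rw [hmul]
      have : (1 : ZMod 2) + 1 = 0 := by decide
      rw [this, mem0]; simp
  · -- skew-symmetry
    rintro x y ⟨α, v, yy⟩ ⟨β, w, z⟩ hX hY
    rcases two x with rfl | rfl <;> rcases two y with rfl | rfl
    · rw [mem0] at hX hY
      obtain ⟨rfl, rfl⟩ := hX; obtain ⟨rfl, rfl⟩ := hY
      rw [hmul, hmul, s00]; simp [Prod.ext_iff]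
    · rw [mem0] at hX; rw [mem1] at hY
      obtain ⟨rfl, rfl⟩ := hX; subst hY
      rw [hmul, hmul, s01]; simp [Prod.ext_iff]
    · rw [mem1] at hX; rw [mem0] at hY
      subst hX; obtain ⟨rfl, rfl⟩ := hY
      rw [hmul, hmul, s10]; simp [Prod.ext_iff]
    · rw [mem1] at hX hY
      subst hX; subst hY
      rw [hmul, hmul, s11]
      simp [Prod.ext_iff, mul_comm]
  · -- Malcev identity: everything is zero
    intro x y z t X Y Z T _ _ _ _
    rw [hdbl, htrip, htrip, htrip, htrip]
    simp
  · -- even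
    rintro x y ⟨α, v, yy⟩ ⟨β, w, z⟩ hX hY hxy
    rcases two x with rfl | rfl <;> rcases two y with rfl | rfl
    · exact absurd rfl hxy
    · rw [mem0] at hX; rw [mem1] at hY
      obtain ⟨rfl, rfl⟩ := hX; subst hY
      rw [hB]; simp
    · rw [mem1] at hX; rw [mem0] at hY
      subst hX; obtain ⟨rfl, rfl⟩ := hY
      rw [hB]; simp
    · exact absurd rfl hxy
  · -- supersymmetry
    rintro x y ⟨α, v, yy⟩ ⟨β, w, z⟩ hX hY
    rcases two x with rfl | rfl <;> rcases two y with rfl | rfl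
    · rw [mem0] at hX hY
      obtain ⟨rfl, rfl⟩ := hX; obtain ⟨rfl, rfl⟩ := hY
      rw [hB, hB, s00]; ring_nf
    · rw [mem0] at hX; rw [mem1] at hY
      obtain ⟨rfl, rfl⟩ := hX; subst hY
      rw [hB, hB, s01]; simp
    · rw [mem1] at hX; rw [mem0] at hY
      subst hX; obtain ⟨rfl, rfl⟩ := hY
      rw [hB, hB, s10]; simp
    · rw [mem1] at hX hY
      subst hX; subst hY
      rw [hB, hB, s11]
      simp only [zero_mul, zero_add, zero_sub, neg_mul, one_mul, neg_sub]
      ring_nf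
      rw [Finset.sum_congr rfl (fun i _ => mul_comm (z i) (v i)),
        Finset.sum_congr rfl (fun i _ => mul_comm (yy i) (w i))]
  · -- non-degenerate
    rintro ⟨α, v, y⟩ h
    have hα := h (1, 0, 0)
    rw [hB] at hα
    simp at hα
    have hv : ∀ i, v i = 0 := by
      intro i
      have := h (0, 0, Pi.single i 1)
      rw [hB] at this
      simpa [Pi.single_apply, mul_ite, Finset.sum_ite_eq'] using this
    have hy : ∀ i, y i = 0 := by
      intro i
      have := h (0, Pi.single i 1, 0)
      rw [hB] at this
      simpa [Pi.single_apply, mul_ite, Finset.sum_ite_eq'] using this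
    have hv0 : v = 0 := funext hv
    have hy0 : y = 0 := funext hy
    simp [Prod.ext_iff, hα, hv0, hy0]
  · -- invariance
    rintro ⟨α, v, y⟩ ⟨β, w, z⟩ ⟨γ, u, t⟩
    rw [hmul, hmul, hB, hB]
    simp only [Pi.zero_apply, zero_mul, mul_zero, Finset.sum_const_zero, sub_zero,
      add_zero, Pi.sub_apply, Pi.smul_apply, smul_eq_mul]
    rw [Finset.sum_mul, Finset.mul_sum, ← Finset.sum_add_distrib, ← Finset.sum_sub_distrib]
    exact Finset.sum_congr rfl (fun i _ => by ring)
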